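/- arXiv:1812.07075 — 6 statements merged into one kernel-verified Lean document; each statement's English description precedes it below -/
import Mathlib

section
/- Let C be a set of p ≥ 1 edges of a finite simple triangle-free graph in which every vertex has degree at most 3. Then the entropy impurity of C satisfies I_Ent(C) ≥ 2p + p·log₂ p. -/
open scoped Classical


lemma logb_le_of_pow_le {x : ℝ} {q r : ℕ} (hx : 0 < x) (h : x ^ q ≤ 2 ^ r) (hq : 0 < q) :
    Real.logb 2 x ≤ (r : ℝ) / q := by
  rw [Real.logb, div_le_div_iff₀ (Real.log_pos one_lt_two) (by exact_mod_cast hq)]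
  have := Real.log_le_log (by positivity) (h : x ^ q ≤ (2:ℝ) ^ r)
  rw [Real.log_pow, Real.log_pow] at this
  linarith

lemma le_logb_of_pow_le {x : ℝ} {q r : ℕ} (h : 2 ^ r ≤ x ^ q) (hq : 0 < q) :
    (r : ℝ) / q ≤ Real.logb 2 x := by
  rw [Real.logb, div_le_div_iff₀ (by exact_mod_cast hq) (Real.log_pos one_lt_two)]
  have := Real.log_le_log (by positivity) (h : (2:ℝ) ^ r ≤ x ^ q)
  rw [Real.log_pow, Real.log_pow] at this
  linarith

set_option maxHeartbeats 2000000 in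
lemma key_ineq (a b c p : ℕ) (hp : 1 ≤ p) (h1 : 3*a+2*b+c = 2*p)
    (h2 : 9*a+4*b+c ≤ p*(a+b+c)) :
    2*(b:ℝ) + 3*(a:ℝ) * Real.logb 2 3 ≤ (p:ℝ) * Real.logb 2 (p:ℝ) := by
  have hLlo : (3:ℝ)/2 ≤ Real.logb 2 3 := le_logb_of_pow_le (x := 3) (q := 2) (r := 3) (by norm_num) (by norm_num)
  have hLhi : Real.logb 2 3 ≤ (27:ℝ)/17 := logb_le_of_pow_le (by norm_num) (by norm_num) (by norm_num)
  rcases le_or_gt p 8 with hp8 | hp9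
  · have h5 : (30:ℝ)/13 ≤ Real.logb 2 5 := le_logb_of_pow_le (x := 5) (q := 13) (r := 30) (by norm_num) (by norm_num)
    have h7 : (14:ℝ)/5 ≤ Real.logb 2 7 := le_logb_of_pow_le (x := 7) (q := 5) (r := 14) (by norm_num) (by norm_num)
    have e1 : Real.logb 2 (1:ℝ) = 0 := Real.logb_one
    have e2 : Real.logb 2 (2:ℝ) = 1 := Real.logb_self_eq_one (by norm_num)
    have e4 : Real.logb 2 (4:ℝ) = 2 := by
      rw [show (4:ℝ) = 2^(2:ℕ) by norm_num, Real.logb_pow, e2]; norm_num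
    have e8 : Real.logb 2 (8:ℝ) = 3 := by
      rw [show (8:ℝ) = 2^(3:ℕ) by norm_num, Real.logb_pow, e2]; norm_num
    have e6 : Real.logb 2 (6:ℝ) = 1 + Real.logb 2 3 := by
      rw [show (6:ℝ) = 2*3 by norm_num, Real.logb_mul (by norm_num) (by norm_num), e2]
    have ha : a ≤ 5 := by omega
    have hbb : b ≤ 8 := by omega
    interval_cases p <;> interval_cases a <;> (try omega) <;> interval_cases b <;>
      first
        | omega
        | (push_cast; (try simp only [e1, e2, e4, e8, e6]); linarith)
  · have h9 : Real.logb 2 9 ≤ Real.logb 2 p := by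
      apply Real.logb_le_logb_of_le (by norm_num) (by norm_num)
      exact_mod_cast (by omega : 9 ≤ p)
    have h9' : Real.logb 2 (9:ℝ) = 2 * Real.logb 2 3 := by
      rw [show (9:ℝ) = 3^(2:ℕ) by norm_num, Real.logb_pow]; push_cast; ring
    have ha : 3*(a:ℝ) ≤ 2*p := by exact_mod_cast (by omega : 3*a ≤ 2*p)
    have hab : 3*(a:ℝ) + 2*b ≤ 2*p := by exact_mod_cast (by omega : 3*a+2*b ≤ 2*p)
    nlinarith [mul_le_mul_of_nonneg_left h9 (by positivity : (0:ℝ) ≤ (p:ℝ)),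
      mul_nonneg (sub_nonneg.2 (by linarith : (1:ℝ) ≤ Real.logb 2 3)) (sub_nonneg.2 ha)]

section Helpers
variable {V : Type*} [Fintype V]

lemma card_mem_eq_two (e : Sym2 V) (he : ¬ e.IsDiag) :
    (Finset.univ.filter (fun v => v ∈ e)).card = 2 := by
  induction e with
  | _ x y =>
    have hxy : x ≠ y := by simpa using he
    have : Finset.univ.filter (fun v => v ∈ s(x, y)) = {x, y} := by
      ext v; simp [Sym2.mem_iff]
    rw [this, Finset.card_insert_of_notMem (by simpa using hxy), Finset.card_singleton]

lemma handshake (C : Finset (Sym2 V)) (hC : ∀ e ∈ C, ¬ e.IsDiag) :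
    ∑ v : V, (C.filter (fun e => v ∈ e)).card = 2 * C.card := by
  have h1 : ∀ v : V, (C.filter (fun e => v ∈ e)).card = ∑ e ∈ C, if v ∈ e then 1 else 0 := by
    intro v; rw [Finset.card_filter]
  simp only [h1]
  rw [Finset.sum_comm]
  have h2 : ∀ e ∈ C, (∑ v : V, if v ∈ e then 1 else 0) = 2 := by
    intro e he
    rw [← Finset.card_filter]
    exact card_mem_eq_two e (hC e he)
  rw [Finset.sum_congr rfl h2, Finset.sum_const, smul_eq_mul, mul_comm]

lemma count_sum {M : Type*} [AddCommMonoid M] (d : V → ℕ) (hd : ∀ v, d v ≤ 3)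
    (g : ℕ → M) (h0 : g 0 = 0) :
    ∑ v : V, g (d v) =
      (Finset.univ.filter (fun v => d v = 1)).card • g 1 +
      (Finset.univ.filter (fun v => d v = 2)).card • g 2 +
      (Finset.univ.filter (fun v => d v = 3)).card • g 3 := by
  have key : ∀ v : V, g (d v) =
      (if d v = 1 then g 1 else 0) + (if d v = 2 then g 2 else 0) +
      (if d v = 3 then g 3 else 0) := by
    intro v
    have := hd v
    interval_cases h : d v <;> simp [h0]
  simp only [key]
  rw [Finset.sum_add_distrib, Finset.sum_add_distrib]
  have aux : ∀ (k : ℕ), (∑ v : V, if d v = k then g k else 0) =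
      (Finset.univ.filter (fun v => d v = k)).card • g k := by
    intro k
    rw [← Finset.sum_filter, Finset.sum_const]
  rw [aux 1, aux 2, aux 3]

variable (G : SimpleGraph V) [DecidableRel G.Adj]

lemma deg_bound (C : Finset (Sym2 V)) (hsub : (↑C : Set (Sym2 V)) ⊆ G.edgeSet) (v : V) :
    (C.filter (fun e => v ∈ e)).card ≤ G.degree v := by
  rw [← SimpleGraph.card_incidenceFinset_eq_degree]
  apply Finset.card_le_card
  intro e he
  simp only [Finset.mem_filter] at he
  rw [SimpleGraph.mem_incidenceFinset]
  exact ⟨hsub he.1, he.2⟩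

lemma edge_deg_sum_le (htf : G.CliqueFree 3) (C : Finset (Sym2 V))
    (hsub : (↑C : Set (Sym2 V)) ⊆ G.edgeSet) {x y : V} (hxy : G.Adj x y) :
    (C.filter (fun e => x ∈ e)).card + (C.filter (fun e => y ∈ e)).card
      ≤ (Finset.univ.filter (fun v => (C.filter (fun e => v ∈ e)).card ≠ 0)).card := by
  set N : V → Finset V := fun u => Finset.univ.filter (fun w => s(u, w) ∈ C) with hN
  have hcard : ∀ u : V, (N u).card = (C.filter (fun e => u ∈ e)).card := by
    intro u
    apply Finset.card_bij (fun w _ => s(u, w))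
    · intro w hw
      simp only [hN, Finset.mem_filter] at hw
      simp [hw.2]
    · intro w₁ h₁ w₂ h₂ h
      exact (Sym2.congr_right).mp h
    · intro e he
      simp only [Finset.mem_filter] at he
      obtain ⟨w, rfl⟩ := (Sym2.mem_iff_exists).mp he.2
      exact ⟨w, by simp [hN, he.1], rfl⟩
  have hdisj : Disjoint (N x) (N y) := by
    rw [Finset.disjoint_left]
    intro w hwx hwy
    simp only [hN, Finset.mem_filter] at hwx hwy
    have hx : G.Adj x w := (SimpleGraph.mem_edgeSet G).mp (hsub hwx.2)
    have hy : G.Adj y w := (SimpleGraph.mem_edgeSet G).mp (hsub hwy.2)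
    exact htf {x, y, w} (SimpleGraph.is3Clique_triple_iff.mpr ⟨hxy, hx, hy⟩)
  have hsub' : N x ∪ N y ⊆ Finset.univ.filter (fun v => (C.filter (fun e => v ∈ e)).card ≠ 0) := by
    intro w hw
    have hmem : ∃ u, s(u, w) ∈ C := by
      rcases Finset.mem_union.mp hw with h | h
      · exact ⟨x, (Finset.mem_filter.mp h).2⟩
      · exact ⟨y, (Finset.mem_filter.mp h).2⟩
    obtain ⟨u, hu⟩ := hmem
    refine Finset.mem_filter.mpr ⟨Finset.mem_univ w, ?_⟩
    apply Finset.card_ne_zero_of_mem (a := s(u, w))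
    exact Finset.mem_filter.mpr ⟨hu, Sym2.mem_mk_right u w⟩
  calc (C.filter (fun e => x ∈ e)).card + (C.filter (fun e => y ∈ e)).card
      = (N x).card + (N y).card := by rw [hcard, hcard]
    _ = (N x ∪ N y).card := (Finset.card_union_of_disjoint hdisj).symm
    _ ≤ _ := Finset.card_le_card hsub'

end Helpers

/-- The entropy impurity of a set `C` of edges:
`I_Ent(C) = Σ_{v ∈ V} d^C(v) · log₂(2|C| / d^C(v))`. -/
noncomputable def impurity {V : Type*} [Fintype V] (C : Finset (Sym2 V)) : ℝ :=
  ∑ v : V, ((C.filter (fun e => v ∈ e)).card : ℝ) *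
    Real.logb 2 ((2 * C.card : ℝ) / ((C.filter (fun e => v ∈ e)).card : ℝ))

/-- if `C` is a set of `p ≥ 1` edges of a finite simple triangle-free
graph in which every vertex has degree at most 3, then `I_Ent(C) ≥ 2p + p·log₂ p`. -/
theorem impurity_lower_bound {V : Type*} [Fintype V] (G : SimpleGraph V)
    [DecidableRel G.Adj]
    (htf : G.CliqueFree 3) (hdeg : ∀ v : V, G.degree v ≤ 3)
    (C : Finset (Sym2 V)) (p : ℕ) (hp : 1 ≤ p)
    (hsub : (↑C : Set (Sym2 V)) ⊆ G.edgeSet) (hcard : C.card = p) :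
    2 * (p : ℝ) + (p : ℝ) * Real.logb 2 (p : ℝ) ≤ impurity C := by
  set d : V → ℕ := fun v => (C.filter (fun e => v ∈ e)).card with hd
  have hnd : ∀ e ∈ C, ¬ e.IsDiag := fun e he =>
    (G.not_isDiag_of_mem_edgeSet (hsub he))
  have hsum : ∑ v : V, d v = 2 * p := by
    rw [← hcard]; exact handshake C hnd
  have hd3 : ∀ v, d v ≤ 3 := fun v => (deg_bound G C hsub v).trans (hdeg v)
  set a := (Finset.univ.filter (fun v => d v = 3)).card with ha
  set b := (Finset.univ.filter (fun v => d v = 2)).card with hb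
  set c := (Finset.univ.filter (fun v => d v = 1)).card with hc
  set t := (Finset.univ.filter (fun v => d v ≠ 0)).card with ht
  -- counting identities
  have hsum' : 3*a + 2*b + c = 2*p := by
    have h := count_sum d hd3 (fun n => n) rfl
    simp only [smul_eq_mul, mul_one] at h
    rw [hsum] at h
    omega
  have hT : t = a + b + c := by
    have h1 : t = ∑ v : V, min (d v) 1 := by
      rw [ht, Finset.card_filter]
      apply Finset.sum_congr rfl
      intro v _
      rcases Nat.eq_zero_or_pos (d v) with h | h
      · simp [h]
      · rw [if_pos (by omega : d v ≠ 0), min_eq_right (by omega : 1 ≤ d v)]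
    have h2 := count_sum d hd3 (fun n => min n 1) rfl
    simp only [smul_eq_mul] at h2
    norm_num at h2
    rw [h1, h2, ha, hb, hc]
    omega
  -- sum of squares bound
  have hsq : ∑ v : V, d v * d v ≤ p * t := by
    have step1 : ∀ v : V, d v * d v = ∑ e ∈ C, if v ∈ e then d v else 0 := by
      intro v
      rw [← Finset.sum_filter, Finset.sum_const, smul_eq_mul,
        show (C.filter (fun e => v ∈ e)).card = d v from rfl]
    calc ∑ v : V, d v * d v = ∑ e ∈ C, ∑ v : V, if v ∈ e then d v else 0 := by
          simp only [step1]; rw [Finset.sum_comm]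
      _ ≤ ∑ _e ∈ C, t := by
          apply Finset.sum_le_sum
          intro e he
          induction e with
          | _ x y =>
            have hadj : G.Adj x y := (SimpleGraph.mem_edgeSet G).mp (hsub he)
            have hxy : x ≠ y := hadj.ne
            have hfil : Finset.univ.filter (fun v => v ∈ s(x, y)) = {x, y} := by
              ext v; simp [Sym2.mem_iff]
            rw [← Finset.sum_filter, hfil, Finset.sum_pair hxy]
            exact edge_deg_sum_le G htf C hsub hadj
      _ = p * t := by rw [Finset.sum_const, smul_eq_mul, hcard]
  have hsq' : 9*a + 4*b + c ≤ p * (a + b + c) := by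
    have := count_sum d hd3 (fun n => n * n) rfl
    simp only [smul_eq_mul] at this
    rw [this, hT] at hsq
    linarith
  -- the key numeric inequality
  have hkey := key_ineq a b c p hp hsum' hsq'
  -- real identities
  have hp0 : (0:ℝ) < p := by exact_mod_cast hp
  have hlog2p : Real.logb 2 (2 * (p:ℝ)) = 1 + Real.logb 2 p := by
    rw [Real.logb_mul (by norm_num) (ne_of_gt hp0), Real.logb_self_eq_one (by norm_num)]
  have hS : ∑ v : V, (d v : ℝ) * Real.logb 2 (d v) =
      2*(b:ℝ) + 3*(a:ℝ) * Real.logb 2 3 := by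
    have := count_sum (M := ℝ) d hd3 (fun n => (n:ℝ) * Real.logb 2 (n:ℝ)) (by simp)
    rw [this]
    simp only [nsmul_eq_mul]
    push_cast
    rw [Real.logb_one, Real.logb_self_eq_one (by norm_num)]
    ring
  have hsumR : ∑ v : V, (d v : ℝ) = 2 * p := by
    rw [← Nat.cast_sum, hsum]; push_cast; ring
  have himp : impurity C = 2*(p:ℝ)*(1 + Real.logb 2 p)
      - ∑ v : V, (d v : ℝ) * Real.logb 2 (d v) := by
    have hterm : ∀ v : V, (d v : ℝ) * Real.logb 2 ((2 * C.card : ℝ) / (d v : ℝ)) =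
        (d v : ℝ) * (1 + Real.logb 2 p) - (d v : ℝ) * Real.logb 2 (d v) := by
      intro v
      rcases Nat.eq_zero_or_pos (d v) with h | h
      · rw [h]; push_cast; ring
      · have hdv : (d v : ℝ) ≠ 0 := by positivity
        rw [hcard, Real.logb_div (by positivity) hdv, hlog2p]
        ring
    have : impurity C = ∑ v : V, (d v : ℝ) * Real.logb 2 ((2 * C.card : ℝ) / (d v : ℝ)) := rfl
    rw [this, Finset.sum_congr rfl (fun v _ => hterm v), Finset.sum_sub_distrib,
      ← Finset.sum_mul, hsumR]
    try ring
  rw [himp, hS]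
  linarith
end

section
/- Let C be a set of exactly 3 edges of a finite simple graph such that C is neither a 3-star (three edges sharing a common vertex) nor a triangle (three edges on three vertices). Then the entropy impurity of C satisfies I_Ent(C) ≥ 2 + 6·log₂ 3. -/
open Finset


open scoped Classical

/-- The entropy impurity of a set `C` of edges:
`I_Ent(C) = Σ_{v ∈ V} d^C(v) · log₂(2|C| / d^C(v))`. -/
lemma card_mem_sym2 {V : Type*} [Fintype V] (e : Sym2 V) (he : ¬ e.IsDiag) :
    (univ.filter (fun v => v ∈ e)).card = 2 := by
  induction e using Sym2.ind with
  | _ a b =>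
    have hab : a ≠ b := by simpa [Sym2.mk_isDiag_iff] using he
    have : (univ.filter (fun v => v ∈ s(a, b))) = {a, b} := by
      ext v; simp [Sym2.mem_iff]
    rw [this, Finset.card_pair hab]


/-- if `C` is a set of exactly 3 edges of a finite simple graph which is
neither a 3-star (all three edges share a common vertex) nor a triangle (three edges
spanned by three vertices), then `I_Ent(C) ≥ 2 + 6·log₂ 3`. -/
theorem impurity_three_edges {V : Type*} [Fintype V] (G : SimpleGraph V)
    (C : Finset (Sym2 V)) (hsub : (↑C : Set (Sym2 V)) ⊆ G.edgeSet)
    (hcard : C.card = 3)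
    (hnotstar : ¬ ∃ v : V, ∀ e ∈ C, v ∈ e)
    (hnottriangle : ¬ ∃ x y z : V, C = {s(x, y), s(y, z), s(x, z)}) :
    2 + 6 * Real.logb 2 3 ≤ impurity C := by
  set d : V → ℕ := fun v => (C.filter (fun e => v ∈ e)).card with hd
  have hnd : ∀ e ∈ C, ¬ e.IsDiag := fun e he =>
    G.not_isDiag_of_mem_edgeSet (hsub he)
  -- sum of degrees is 6
  have hsum : ∑ v : V, d v = 6 := by
    have : ∀ v : V, d v = ∑ e ∈ C, if v ∈ e then 1 else 0 := by
      intro v; rw [hd]; exact Finset.card_filter _ _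
    simp only [this]
    rw [Finset.sum_comm]
    have : ∀ e ∈ C, (∑ v : V, if v ∈ e then 1 else 0) = 2 := by
      intro e he
      rw [← Finset.card_filter]
      exact card_mem_sym2 e (hnd e he)
    rw [Finset.sum_congr rfl this, Finset.sum_const, hcard]; rfl
  -- each degree at most 2
  have hdle : ∀ v : V, d v ≤ 2 := by
    intro v
    have h3 : d v ≤ 3 := hcard ▸ Finset.card_filter_le _ _
    rcases Nat.lt_or_ge (d v) 3 with h | h
    · omega
    · exfalso
      have h3' : (3:ℕ) ≤ d v := h
      have heq : C.filter (fun e => v ∈ e) = C :=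
        Finset.eq_of_subset_of_card_le (Finset.filter_subset _ _) (hcard ▸ h3')
      refine hnotstar ⟨v, fun e he => ?_⟩
      have : e ∈ C.filter (fun e => v ∈ e) := heq.symm ▸ he
      exact (Finset.mem_filter.1 this).2
  -- at most two vertices of degree 2
  have hk : (univ.filter (fun v => d v = 2)).card ≤ 2 := by
    by_contra hk
    push_neg at hk
    obtain ⟨T, hTsub, hT3⟩ := Finset.exists_subset_card_eq hk
    obtain ⟨x, y, z, hxy, hxz, hyz, hTeq⟩ := Finset.card_eq_three.1 hT3
    have hdx : d x = 2 := (Finset.mem_filter.1 (hTsub (hTeq ▸ (by simp : x ∈ ({x,y,z}:Finset V))))).2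
    have hdy : d y = 2 := (Finset.mem_filter.1 (hTsub (hTeq ▸ (by simp : y ∈ ({x,y,z}:Finset V))))).2
    have hdz : d z = 2 := (Finset.mem_filter.1 (hTsub (hTeq ▸ (by simp : z ∈ ({x,y,z}:Finset V))))).2
    -- all other vertices have degree 0
    have hzero : ∀ w : V, w ∉ ({x, y, z} : Finset V) → d w = 0 := by
      intro w hw
      have hsub' : ({x, y, z, w} : Finset V) ⊆ univ := Finset.subset_univ _
      have hle : ∑ v ∈ ({x, y, z, w} : Finset V), d v ≤ ∑ v : V, d v :=
        Finset.sum_le_sum_of_subset hsub'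
      simp only [Finset.mem_insert, Finset.mem_singleton, not_or] at hw
      obtain ⟨hwx, hwy, hwz⟩ := hw
      have : ∑ v ∈ ({x, y, z, w} : Finset V), d v = d x + d y + d z + d w := by
        rw [Finset.sum_insert (by simp [hxy, hxz, Ne.symm hwx]),
            Finset.sum_insert (by simp [hyz, Ne.symm hwy]),
            Finset.sum_insert (by simp [Ne.symm hwz]), Finset.sum_singleton]
        ring
      omega
    -- each edge has both endpoints in {x,y,z}
    have hmem : ∀ e ∈ C, ∀ v, v ∈ e → v ∈ ({x, y, z} : Finset V) := by
      intro e he v hv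
      by_contra hvn
      have h0 : d v = 0 := hzero v hvn
      have : e ∈ C.filter (fun e => v ∈ e) := Finset.mem_filter.2 ⟨he, hv⟩
      rw [hd] at h0
      simp only [Finset.card_eq_zero] at h0
      rw [h0] at this
      exact absurd this (Finset.notMem_empty _)
    have hCsub : C ⊆ ({s(x, y), s(y, z), s(x, z)} : Finset (Sym2 V)) := by
      intro e he
      induction e using Sym2.ind with
      | _ a b =>
        have hab : a ≠ b := by
          have := hnd _ he
          simpa [Sym2.mk_isDiag_iff] using this
        have ha := hmem _ he a (by simp)
        have hb := hmem _ he b (by simp)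
        simp only [Finset.mem_insert, Finset.mem_singleton] at ha hb ⊢
        rcases ha with rfl | rfl | rfl <;> rcases hb with rfl | rfl | rfl <;>
          simp_all [Sym2.eq_iff] <;> tauto
    have hTcard : ({s(x, y), s(y, z), s(x, z)} : Finset (Sym2 V)).card ≤ 3 := by
      apply le_trans (Finset.card_insert_le _ _)
      simp [Finset.card_insert_le]
      exact lt_of_le_of_lt (Finset.card_insert_le _ _) (by simp)
    exact hnottriangle ⟨x, y, z,
      Finset.eq_of_subset_of_card_le hCsub (le_trans hTcard hcard.ge)⟩
  -- the analytic estimate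
  set L : ℝ := Real.logb 2 3 with hL
  have hL6 : Real.logb 2 6 = 1 + L := by
    rw [hL, show (6:ℝ) = 2 * 3 by norm_num,
        Real.logb_mul (by norm_num) (by norm_num), Real.logb_self_eq_one] <;> norm_num
  have himp : impurity C = ∑ v : V, (d v : ℝ) * Real.logb 2 (6 / (d v : ℝ)) := by
    unfold impurity
    rw [hcard]
    norm_num
    rfl
  have hpt : ∀ v : V, (1 + L) * (d v : ℝ) - 2 * (if d v = 2 then (1:ℝ) else 0) ≤
      (d v : ℝ) * Real.logb 2 (6 / (d v : ℝ)) := by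
    intro v
    have h2 := hdle v
    set n := d v with hn
    interval_cases n
    · simp
    · simp only [Nat.cast_one, one_mul, div_one]
      rw [hL6]
      norm_num
    · have : ((6:ℝ) / (2:ℕ)) = 3 := by norm_num
      rw [this]
      push_cast
      ring_nf
      rw [hL]
  have hsumR : ∑ v : V, ((1 + L) * (d v : ℝ) - 2 * (if d v = 2 then (1:ℝ) else 0)) ≤
      impurity C := by
    rw [himp]
    exact Finset.sum_le_sum (fun v _ => hpt v)
  have hsum1 : ∑ v : V, (d v : ℝ) = 6 := by
    rw [← Nat.cast_sum, hsum]; norm_num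
  have hsum2 : ∑ v : V, (if d v = 2 then (1:ℝ) else 0) =
      ((univ.filter (fun v => d v = 2)).card : ℝ) := by
    rw [Finset.sum_boole]
  have hkR : ((univ.filter (fun v => d v = 2)).card : ℝ) ≤ 2 := by
    exact_mod_cast hk
  have : ∑ v : V, ((1 + L) * (d v : ℝ) - 2 * (if d v = 2 then (1:ℝ) else 0)) =
      (1 + L) * 6 - 2 * ((univ.filter (fun v => d v = 2)).card : ℝ) := by
    rw [Finset.sum_sub_distrib, ← Finset.mul_sum, hsum1, ← Finset.mul_sum, hsum2]
  rw [this] at hsumR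
  linarith
end

section
/- Let C₁, …, C_e (e ≥ 1) be pairwise disjoint sets of edges of a finite simple triangle-free graph of maximum degree at most 3, with |Cᵢ| ≥ 3 for every i, and let q = Σᵢ |Cᵢ| be the total number of edges. Then Σ_{i=1}^{e} I_Ent(Cᵢ) ≥ 2q + (q/e)·log₂(q/e). -/
open scoped Classical

open Finset

section Helpers

variable {V : Type*} [Fintype V]


private lemma pair_fiber_card (H : SimpleGraph V) [DecidableRel H.Adj] (e : Sym2 V)
    (he : e ∈ H.edgeSet) :
    ((Finset.univ.filter fun p : V × V => H.Adj p.1 p.2).filter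
      fun p => s(p.1, p.2) = e).card = 2 := by
  classical
  induction e using Sym2.ind with
  | _ a b =>
    have hab : H.Adj a b := (H.mem_edgeSet).1 he
    have hne : a ≠ b := hab.ne
    have hset : ((Finset.univ.filter fun p : V × V => H.Adj p.1 p.2).filter
        fun p => s(p.1, p.2) = s(a, b)) = {(a, b), (b, a)} := by
      ext ⟨x, y⟩
      simp only [Finset.mem_filter, Finset.mem_univ, true_and, Finset.mem_insert,
        Finset.mem_singleton, Sym2.eq_iff, Prod.mk.injEq]
      constructor
      · rintro ⟨-, h⟩; exact h
      · rintro (⟨rfl, rfl⟩ | ⟨rfl, rfl⟩)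
        · exact ⟨hab, Or.inl ⟨rfl, rfl⟩⟩
        · exact ⟨hab.symm, Or.inr ⟨rfl, rfl⟩⟩
    rw [hset, Finset.card_insert_of_notMem (by simp [hne]), Finset.card_singleton]

private lemma sum_pairs_eq (H : SimpleGraph V) [DecidableRel H.Adj] (f : Sym2 V → ℝ) :
    ∑ v, ∑ u ∈ H.neighborFinset v, f s(v, u) = 2 * ∑ e ∈ H.edgeFinset, f e := by
  classical
  have h1 : ∑ v, ∑ u ∈ H.neighborFinset v, f s(v, u)
      = ∑ p ∈ Finset.univ.filter (fun p : V × V => H.Adj p.1 p.2), f s(p.1, p.2) := by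
    rw [Finset.sum_filter, Fintype.sum_prod_type]
    refine Finset.sum_congr rfl fun v _ => ?_
    rw [SimpleGraph.neighborFinset_eq_filter, Finset.sum_filter]
  have maps : ∀ p ∈ Finset.univ.filter (fun p : V × V => H.Adj p.1 p.2),
      s(p.1, p.2) ∈ H.edgeFinset := by
    intro p hp
    rw [SimpleGraph.mem_edgeFinset, SimpleGraph.mem_edgeSet]
    exact (Finset.mem_filter.1 hp).2
  rw [h1, ← Finset.sum_fiberwise_of_maps_to' maps f, Finset.mul_sum]
  refine Finset.sum_congr rfl fun e he => ?_
  rw [Finset.sum_const, pair_fiber_card H e (SimpleGraph.mem_edgeFinset.1 he)]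
  simp [mul_comm]


private lemma sum_nbhd_right (H : SimpleGraph V) [DecidableRel H.Adj] (g : V → ℝ) :
    ∑ v, ∑ u ∈ H.neighborFinset v, g u = ∑ v, (H.degree v : ℝ) * g v := by
  classical
  have h1 : ∀ v, ∑ u ∈ H.neighborFinset v, g u = ∑ u, if H.Adj v u then g u else 0 := fun v => by
    rw [SimpleGraph.neighborFinset_eq_filter, Finset.sum_filter]
  simp_rw [h1]
  rw [Finset.sum_comm]
  refine Finset.sum_congr rfl fun u _ => ?_
  have h2 : ∑ v, (if H.Adj v u then g u else 0) = ∑ v, (if H.Adj u v then g u else 0) :=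
    Finset.sum_congr rfl fun v _ => if_congr (H.adj_comm v u) rfl rfl
  rw [h2]
  rw [← Finset.sum_filter, Finset.sum_const, ← SimpleGraph.neighborFinset_eq_filter]
  rw [SimpleGraph.card_neighborFinset_eq_degree, nsmul_eq_mul]

private lemma key_nbhd (H : SimpleGraph V) [DecidableRel H.Adj] (htf : H.CliqueFree 3) (v : V) :
    ∑ u ∈ H.neighborFinset v, (H.degree u : ℝ) ≤ (H.edgeFinset.card : ℝ) := by
  classical
  have hnat : ∑ u ∈ H.neighborFinset v, H.degree u ≤ H.edgeFinset.card := by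
    have hdisj : ∀ u ∈ H.neighborFinset v, ∀ w ∈ H.neighborFinset v, u ≠ w →
        Disjoint (H.incidenceFinset u) (H.incidenceFinset w) := by
      intro u hu w hw huw
      rw [Finset.disjoint_left]
      intro e heu hew
      rw [SimpleGraph.mem_incidenceFinset] at heu hew
      have he : e = s(u, w) := (Sym2.mem_and_mem_iff huw).1 ⟨heu.2, hew.2⟩
      have hadj : H.Adj u w := by
        rw [← SimpleGraph.mem_edgeSet, ← he]; exact heu.1
      have hvu : H.Adj v u := (SimpleGraph.mem_neighborFinset _ _ _).1 hu
      have hvw : H.Adj v w := (SimpleGraph.mem_neighborFinset _ _ _).1 hw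
      exact htf {v, u, w} (SimpleGraph.is3Clique_triple_iff.2 ⟨hvu, hvw, hadj⟩)
    have hcards : ∀ u, u ∈ H.neighborFinset v → H.degree u = (H.incidenceFinset u).card :=
      fun u _ => (SimpleGraph.card_incidenceFinset_eq_degree H u).symm
    calc ∑ u ∈ H.neighborFinset v, H.degree u
        = ∑ u ∈ H.neighborFinset v, (H.incidenceFinset u).card :=
          Finset.sum_congr rfl hcards
      _ = ((H.neighborFinset v).biUnion fun u => H.incidenceFinset u).card :=
          (Finset.card_biUnion hdisj).symm
      _ ≤ H.edgeFinset.card := by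
          apply Finset.card_le_card
          intro e he
          obtain ⟨u, _, heu⟩ := Finset.mem_biUnion.1 he
          rw [SimpleGraph.mem_incidenceFinset] at heu
          exact SimpleGraph.mem_edgeFinset.2 heu.1
  exact_mod_cast hnat


private lemma edgeFinset_eqC {H : SimpleGraph V} {C : Finset (Sym2 V)}
    {inst : Fintype H.edgeSet} (h : H.edgeSet = ↑C) :
    @SimpleGraph.edgeFinset _ H inst = C := by
  apply Finset.coe_injective
  rw [SimpleGraph.coe_edgeFinset, h]

private lemma impurity_lower (G : SimpleGraph V) (htf : G.CliqueFree 3)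
    (C : Finset (Sym2 V)) (hsub : (↑C : Set (Sym2 V)) ⊆ G.edgeSet) (h3 : 3 ≤ C.card) :
    2 * (C.card : ℝ) + (C.card : ℝ) * Real.logb 2 (C.card : ℝ) ≤ impurity C := by
  classical
  set H : SimpleGraph V := SimpleGraph.fromEdgeSet ↑C with hHdef
  haveI : DecidableRel H.Adj := Classical.decRel _
  have hHG : H ≤ G := by
    intro a b hab
    rw [hHdef, SimpleGraph.fromEdgeSet_adj] at hab
    exact (G.mem_edgeSet).1 (hsub hab.1)
  have htfH : H.CliqueFree 3 := htf.anti hHG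
  have hdiag : ∀ e ∈ C, ¬ e.IsDiag := fun e he => G.not_isDiag_of_mem_edgeSet (hsub he)
  have hedgeSet : H.edgeSet = ↑C := by
    rw [hHdef, SimpleGraph.edgeSet_fromEdgeSet]
    ext e
    simp only [Set.mem_diff, Set.mem_setOf_eq, Finset.mem_coe]
    exact ⟨fun h => h.1, fun h => ⟨h, hdiag e h⟩⟩
  -- real card
  have hc3 : (3 : ℝ) ≤ (C.card : ℝ) := by exact_mod_cast h3
  have hc0 : (0 : ℝ) < (C.card : ℝ) := by linarith
  have hcne : (C.card : ℝ) ≠ 0 := ne_of_gt hc0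
  -- degrees
  have hdcard : ∀ v, ((C.filter (fun e => v ∈ e)).card : ℝ) = (H.degree v : ℝ) := by
    intro v
    rw [show C.filter (fun e => v ∈ e) = H.incidenceFinset v from by
      rw [SimpleGraph.incidenceFinset_eq_filter, edgeFinset_eqC hedgeSet],
      SimpleGraph.card_incidenceFinset_eq_degree]
  -- handshake
  have hhs : ∑ v, (H.degree v : ℝ) = 2 * (C.card : ℝ) := by
    have h := H.sum_degrees_eq_twice_card_edges
    rw [edgeFinset_eqC hedgeSet] at h
    exact_mod_cast h
  -- impurity rewrite
  set S : ℝ := ∑ v, (H.degree v : ℝ) * Real.logb 2 (H.degree v : ℝ) with hS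
  have himp : impurity C = 2 * (C.card : ℝ) * Real.logb 2 (2 * (C.card : ℝ)) - S := by
    unfold impurity
    rw [hS]
    have hterm : ∀ v : V, ((C.filter (fun e => v ∈ e)).card : ℝ) *
        Real.logb 2 ((2 * C.card : ℝ) / ((C.filter (fun e => v ∈ e)).card : ℝ))
        = (H.degree v : ℝ) * Real.logb 2 (2 * (C.card : ℝ)) -
          (H.degree v : ℝ) * Real.logb 2 (H.degree v : ℝ) := by
      intro v
      rw [hdcard v]
      by_cases h : (H.degree v : ℝ) = 0
      · rw [h]; ring
      · rw [Real.logb_div (by positivity) h, mul_sub]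
    rw [Finset.sum_congr rfl fun v _ => hterm v, Finset.sum_sub_distrib, ← Finset.sum_mul, hhs]
  -- degree positivity on edges
  have hdeg_pos : ∀ e ∈ C, ∀ v, v ∈ e → (1 : ℝ) ≤ (H.degree v : ℝ) := by
    intro e he v hv
    have hmem : e ∈ C.filter (fun e => v ∈ e) := Finset.mem_filter.2 ⟨he, hv⟩
    have hpos : 0 < (C.filter (fun e => v ∈ e)).card := Finset.card_pos.2 ⟨e, hmem⟩
    have := hdcard v
    have hpos' : (0 : ℝ) < ((C.filter (fun e => v ∈ e)).card : ℝ) := by exact_mod_cast hpos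
    rw [this] at hpos'
    exact_mod_cast hpos'
  -- edge functions
  set F : Sym2 V → ℝ := Sym2.lift ⟨fun a b => Real.logb 2 (H.degree a : ℝ) +
      Real.logb 2 (H.degree b : ℝ), fun a b => by ring⟩ with hF
  set P : Sym2 V → ℝ := Sym2.lift ⟨fun a b => (H.degree a : ℝ) * (H.degree b : ℝ),
      fun a b => by ring⟩ with hP
  -- S as an edge sum
  have hSedge : S = ∑ e ∈ C, F e := by
    have h2 := sum_pairs_eq H F
    rw [edgeFinset_eqC hedgeSet] at h2
    have h4 : ∑ v, ∑ u ∈ H.neighborFinset v, F s(v, u) = 2 * S := by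
      calc ∑ v, ∑ u ∈ H.neighborFinset v, F s(v, u)
          = ∑ v, (∑ u ∈ H.neighborFinset v, Real.logb 2 (H.degree v : ℝ)
              + ∑ u ∈ H.neighborFinset v, Real.logb 2 (H.degree u : ℝ)) := by
            refine Finset.sum_congr rfl fun v _ => ?_
            rw [← Finset.sum_add_distrib]
            exact Finset.sum_congr rfl fun u _ => by rw [hF, Sym2.lift_mk]
        _ = ∑ v, ∑ u ∈ H.neighborFinset v, Real.logb 2 (H.degree v : ℝ)
            + ∑ v, ∑ u ∈ H.neighborFinset v, Real.logb 2 (H.degree u : ℝ) :=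
            Finset.sum_add_distrib
        _ = S + S := by
            congr 1
            · refine Finset.sum_congr rfl fun v _ => ?_
              rw [Finset.sum_const, nsmul_eq_mul, SimpleGraph.card_neighborFinset_eq_degree]
            · rw [sum_nbhd_right H]
        _ = 2 * S := by ring
    linarith [h2, h4]
  -- sum of products bound
  have hPsum : ∑ e ∈ C, P e ≤ (C.card : ℝ) * (C.card : ℝ) := by
    have h2 := sum_pairs_eq H P
    rw [edgeFinset_eqC hedgeSet] at h2
    have h4 : ∑ v, ∑ u ∈ H.neighborFinset v, P s(v, u)
        ≤ 2 * (C.card : ℝ) * (C.card : ℝ) := by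
      calc ∑ v, ∑ u ∈ H.neighborFinset v, P s(v, u)
          = ∑ v, (H.degree v : ℝ) * ∑ u ∈ H.neighborFinset v, (H.degree u : ℝ) := by
            refine Finset.sum_congr rfl fun v _ => ?_
            rw [Finset.mul_sum]
            exact Finset.sum_congr rfl fun u _ => by rw [hP, Sym2.lift_mk]
        _ ≤ ∑ v, (H.degree v : ℝ) * (C.card : ℝ) := by
            refine Finset.sum_le_sum fun v _ => ?_
            have h5 := key_nbhd H htfH v
            rw [edgeFinset_eqC hedgeSet] at h5
            exact mul_le_mul_of_nonneg_left h5 (by positivity)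
        _ = 2 * (C.card : ℝ) * (C.card : ℝ) := by rw [← Finset.sum_mul, hhs]
    linarith
  have hl2 : (0 : ℝ) < Real.log 2 := Real.log_pos one_lt_two
  -- tangent-line bound on each edge
  have hFP : ∀ e ∈ C, F e ≤ Real.logb 2 (C.card : ℝ)
      + (P e / (C.card : ℝ) - 1) / Real.log 2 := by
    intro e he
    induction e using Sym2.ind with
    | _ a b =>
      have ha : (1 : ℝ) ≤ (H.degree a : ℝ) := hdeg_pos _ he a (Sym2.mem_mk_left a b)
      have hb : (1 : ℝ) ≤ (H.degree b : ℝ) := hdeg_pos _ he b (Sym2.mem_mk_right a b)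
      have hFe : F s(a, b) = Real.logb 2 ((H.degree a : ℝ) * (H.degree b : ℝ)) := by
        rw [hF, Sym2.lift_mk, Real.logb_mul (by linarith) (by linarith)]
      have hPe : P s(a, b) = (H.degree a : ℝ) * (H.degree b : ℝ) := by
        rw [hP, Sym2.lift_mk]
      set x : ℝ := (H.degree a : ℝ) * (H.degree b : ℝ) with hx
      have hx0 : (0 : ℝ) < x := by nlinarith
      have hlog : Real.log (x / (C.card : ℝ)) ≤ x / (C.card : ℝ) - 1 :=
        Real.log_le_sub_one_of_pos (div_pos hx0 hc0)
      have hsplit : Real.logb 2 x = Real.logb 2 (C.card : ℝ)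
          + Real.log (x / (C.card : ℝ)) / Real.log 2 := by
        rw [Real.log_div (ne_of_gt hx0) hcne]
        unfold Real.logb
        ring
      rw [hFe, hPe, hsplit]
      have hd : Real.log (x / (C.card : ℝ)) / Real.log 2
          ≤ (x / (C.card : ℝ) - 1) / Real.log 2 := by gcongr
      linarith
  -- S ≤ c logb c
  have hSbound : S ≤ (C.card : ℝ) * Real.logb 2 (C.card : ℝ) := by
    rw [hSedge]
    calc ∑ e ∈ C, F e
        ≤ ∑ e ∈ C, (Real.logb 2 (C.card : ℝ) + (P e / (C.card : ℝ) - 1) / Real.log 2) :=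
          Finset.sum_le_sum hFP
      _ = (C.card : ℝ) * Real.logb 2 (C.card : ℝ)
          + ((∑ e ∈ C, P e) / (C.card : ℝ) - (C.card : ℝ)) / Real.log 2 := by
          rw [Finset.sum_add_distrib, Finset.sum_const, nsmul_eq_mul]
          congr 1
          rw [← Finset.sum_div, Finset.sum_sub_distrib, Finset.sum_const, nsmul_eq_mul,
            mul_one, Finset.sum_div]
      _ ≤ (C.card : ℝ) * Real.logb 2 (C.card : ℝ) := by
          have h6 : (∑ e ∈ C, P e) / (C.card : ℝ) - (C.card : ℝ) ≤ 0 := by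
            rw [sub_nonpos, div_le_iff₀ hc0]
            exact hPsum
          have h7 : ((∑ e ∈ C, P e) / (C.card : ℝ) - (C.card : ℝ)) / Real.log 2 ≤ 0 :=
            div_nonpos_of_nonpos_of_nonneg h6 (le_of_lt hl2)
          linarith
  -- conclude
  have hlog2c : Real.logb 2 (2 * (C.card : ℝ)) = 1 + Real.logb 2 (C.card : ℝ) := by
    rw [Real.logb_mul two_ne_zero hcne, Real.logb_self_eq_one one_lt_two]
  rw [himp, hlog2c]
  have hlogc : (0 : ℝ) ≤ Real.logb 2 (C.card : ℝ) :=
    Real.logb_nonneg one_lt_two (by linarith)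
  nlinarith [hSbound]

end Helpers

/-- if `C₁, …, C_e` (`e ≥ 1`) are pairwise disjoint sets of edges of a
finite simple triangle-free graph of maximum degree at most 3, each with `|Cᵢ| ≥ 3`,
and `q = Σᵢ |Cᵢ|`, then `Σᵢ I_Ent(Cᵢ) ≥ 2q + (q/e)·log₂(q/e)`. -/
theorem impurity_e_group_bound {V : Type*} [Fintype V] (G : SimpleGraph V)
    [DecidableRel G.Adj]
    (htf : G.CliqueFree 3) (hdeg : ∀ v : V, G.degree v ≤ 3)
    (e : ℕ) (he : 1 ≤ e) (C : Fin e → Finset (Sym2 V))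
    (hsub : ∀ i, (↑(C i) : Set (Sym2 V)) ⊆ G.edgeSet)
    (hdisj : ∀ i j, i ≠ j → Disjoint (C i) (C j))
    (hsize : ∀ i, 3 ≤ (C i).card)
    (q : ℕ) (hq : q = ∑ i, (C i).card) :
    2 * (q : ℝ) + ((q : ℝ) / e) * Real.logb 2 ((q : ℝ) / e)
      ≤ ∑ i, impurity (C i) := by
  classical
  have he' : (0 : ℝ) < (e : ℝ) := by exact_mod_cast he
  have hl2 : (0 : ℝ) < Real.log 2 := Real.log_pos one_lt_two
  set a : ℝ := (q : ℝ) / (e : ℝ) with ha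
  have hq3 : (3 : ℝ) * (e : ℝ) ≤ (q : ℝ) := by
    have h1 : 3 * e ≤ ∑ i, (C i).card := by
      calc 3 * e = ∑ _i : Fin e, 3 := by simp [mul_comm]
        _ ≤ ∑ i, (C i).card := Finset.sum_le_sum (fun i _ => hsize i)
    rw [hq]
    exact_mod_cast h1
  have ha3 : (3 : ℝ) ≤ a := by
    rw [ha, le_div_iff₀ he']
    linarith
  have ha0 : (0 : ℝ) < a := by linarith
  have hq0 : (0 : ℝ) < (q : ℝ) := by nlinarith
  -- per-group lower bound
  have himp : ∀ i, 2 * ((C i).card : ℝ) + ((C i).card : ℝ) * Real.logb 2 ((C i).card : ℝ)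
      ≤ impurity (C i) := fun i => impurity_lower G htf (C i) (hsub i) (hsize i)
  -- tangent-line lower bound for each term
  have htan : ∀ i, ((C i).card : ℝ) * Real.logb 2 a + (((C i).card : ℝ) - a) / Real.log 2
      ≤ ((C i).card : ℝ) * Real.logb 2 ((C i).card : ℝ) := by
    intro i
    set ci : ℝ := ((C i).card : ℝ) with hci
    have hci3 : (3 : ℝ) ≤ ci := by rw [hci]; exact_mod_cast hsize i
    have hci0 : (0 : ℝ) < ci := by linarith
    have hlog : 1 - a / ci ≤ Real.log (ci / a) := by
      have h := Real.one_sub_inv_le_log_of_pos (show (0 : ℝ) < ci / a by positivity)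
      rwa [inv_div] at h
    have hsplit : Real.logb 2 ci = Real.logb 2 a + Real.log (ci / a) / Real.log 2 := by
      rw [Real.log_div (ne_of_gt hci0) (ne_of_gt ha0)]
      unfold Real.logb
      ring
    rw [hsplit, mul_add]
    have hkey : ci - a ≤ ci * Real.log (ci / a) := by
      have h := mul_le_mul_of_nonneg_left hlog (le_of_lt hci0)
      have heq : ci * (1 - a / ci) = ci - a := by field_simp
      linarith
    have h2 : (ci - a) / Real.log 2 ≤ ci * (Real.log (ci / a) / Real.log 2) := by
      rw [← mul_div_assoc]
      gcongr
    linarith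
  -- sum everything
  have hsumq : ∑ i, ((C i).card : ℝ) = (q : ℝ) := by
    rw [hq]
    push_cast
    rfl
  have hmain : 2 * (q : ℝ) + (q : ℝ) * Real.logb 2 a ≤ ∑ i, impurity (C i) := by
    have h1 : ∑ i, (2 * ((C i).card : ℝ) + ((C i).card : ℝ) * Real.logb 2 ((C i).card : ℝ))
        ≤ ∑ i, impurity (C i) := Finset.sum_le_sum (fun i _ => himp i)
    have h2 : ∑ i, (2 * ((C i).card : ℝ)
          + (((C i).card : ℝ) * Real.logb 2 a + (((C i).card : ℝ) - a) / Real.log 2))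
        ≤ ∑ i, (2 * ((C i).card : ℝ) + ((C i).card : ℝ) * Real.logb 2 ((C i).card : ℝ)) :=
      Finset.sum_le_sum (fun i _ => by linarith [htan i])
    have h3 : ∑ i, (2 * ((C i).card : ℝ)
          + (((C i).card : ℝ) * Real.logb 2 a + (((C i).card : ℝ) - a) / Real.log 2))
        = 2 * (q : ℝ) + (q : ℝ) * Real.logb 2 a := by
      rw [Finset.sum_add_distrib, Finset.sum_add_distrib, ← Finset.mul_sum, ← Finset.sum_mul,
        hsumq, ← Finset.sum_div, Finset.sum_sub_distrib, hsumq, Finset.sum_const]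
      simp only [Finset.card_univ, Fintype.card_fin, nsmul_eq_mul]
      rw [ha]
      field_simp
      ring
    linarith
  have hfinal : a * Real.logb 2 a ≤ (q : ℝ) * Real.logb 2 a := by
    have hlognn : (0 : ℝ) ≤ Real.logb 2 a := Real.logb_nonneg one_lt_two (by linarith)
    have haq : a ≤ (q : ℝ) := by
      rw [ha, div_le_iff₀ he']
      have he1 : (1 : ℝ) ≤ (e : ℝ) := by exact_mod_cast he
      nlinarith
    exact mul_le_mul_of_nonneg_right haq hlognn
  linarith
end

section
/- Let G be a finite simple graph, let ε > 0, and let k be a positive integer such that every vertex cover of G has size at least k(1+ε). Let the edge set of G be partitioned into k nonempty clusters, and classify them as follows: a is the number of clusters that are 3-stars, b the number that are 2-stars, c the number consisting of a single edge, d the number consisting of 2 edges with no common vertex, and let q be the total number of edges in the remaining clusters. Then c + d + q ≥ kε/2. -/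
open scoped Classical

/-- A vertex cover: a set of vertices touching every edge. -/
def IsVCover {V : Type*} (G : SimpleGraph V) (S : Finset V) : Prop :=
  ∀ e ∈ G.edgeSet, ∃ v ∈ S, v ∈ e

/-- A `p`-star: a set of `p` edges all sharing a common vertex. -/
def IsStar {V : Type*} (p : ℕ) (C : Finset (Sym2 V)) : Prop :=
  C.card = p ∧ ∃ v : V, ∀ e ∈ C, v ∈ e

/-- let `G` be a graph all of whose vertex covers have size at least
`k(1+ε)`, and let the edge set of `G` be partitioned into `k` nonempty clusters.
With `a` = number of 3-star clusters, `b` = number of 2-star clusters, `c` = number of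
single-edge clusters, `d` = number of 2-matching clusters (2 edges, no common vertex),
and `q` = total number of edges in all remaining clusters, one has `c + d + q ≥ kε/2`. -/
theorem remaining_clusters_bound {V : Type*} [Fintype V] (G : SimpleGraph V)
    (ε : ℝ) (hε : 0 < ε) (k : ℕ) (hk : 0 < k)
    (hVC : ∀ S : Finset V, IsVCover G S → (k : ℝ) * (1 + ε) ≤ S.card)
    (C : Fin k → Finset (Sym2 V))
    (hdisj : ∀ i j, i ≠ j → Disjoint (C i) (C j))
    (hcover : ∀ e : Sym2 V, e ∈ G.edgeSet ↔ ∃ i, e ∈ C i)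
    (hne : ∀ i, (C i).Nonempty)
    (c d : ℕ) (q : ℕ)
    (hc : c = (Finset.univ.filter fun i => (C i).card = 1).card)
    (hd : d = (Finset.univ.filter fun i =>
      (C i).card = 2 ∧ ¬ IsStar 2 (C i)).card)
    (hq : q = ∑ i ∈ Finset.univ.filter (fun i =>
        ¬ IsStar 3 (C i) ∧ ¬ IsStar 2 (C i) ∧ (C i).card ≠ 1 ∧
          ¬ ((C i).card = 2 ∧ ¬ IsStar 2 (C i))), (C i).card) :
    (k : ℝ) * ε / 2 ≤ (c : ℝ) + d + q := by
  classical
  -- the "cost" function: 1 extra for 2-matching clusters, card for remaining clusters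
  set g : Fin k → ℕ := fun i =>
    (if (C i).card = 2 ∧ ¬ IsStar 2 (C i) then 1 else 0) +
    (if (¬ IsStar 3 (C i) ∧ ¬ IsStar 2 (C i) ∧ (C i).card ≠ 1 ∧
        ¬ ((C i).card = 2 ∧ ¬ IsStar 2 (C i))) then (C i).card else 0) with hg
  set P : Fin k → Prop := fun i => ∃ v : V, ∀ e ∈ C i, v ∈ e with hP
  set T : Fin k → Finset V := fun i =>
    if h : P i then {h.choose} else (C i).image (fun e => e.out.1) with hT
  set S : Finset V := Finset.univ.biUnion T with hS
  -- S is a vertex cover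
  have hcov : IsVCover G S := by
    intro e he
    obtain ⟨i, hi⟩ := (hcover e).mp he
    by_cases h : P i
    · refine ⟨h.choose, ?_, h.choose_spec e hi⟩
      refine Finset.mem_biUnion.mpr ⟨i, Finset.mem_univ i, ?_⟩
      simp [hT, h]
    · refine ⟨e.out.1, ?_, Sym2.out_fst_mem e⟩
      refine Finset.mem_biUnion.mpr ⟨i, Finset.mem_univ i, ?_⟩
      rw [hT]
      simp only [dif_neg h, Finset.mem_image]
      exact ⟨e, hi, rfl⟩
  -- per-cluster size bound
  have hTcard : ∀ i, (T i).card ≤ 1 + g i := by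
    intro i
    by_cases h : P i
    · have : (T i).card = 1 := by simp [hT, h]
      omega
    · have h1 : (T i).card ≤ (C i).card := by
        rw [hT]; simp only [dif_neg h]; exact Finset.card_image_le
      have hns3 : ¬ IsStar 3 (C i) := fun hs => h hs.2
      have hns2 : ¬ IsStar 2 (C i) := fun hs => h hs.2
      have hc1 : (C i).card ≠ 1 := by
        intro hcard
        obtain ⟨e, he⟩ := Finset.card_eq_one.mp hcard
        refine h ⟨e.out.1, fun e' he' => ?_⟩
        rw [he, Finset.mem_singleton] at he'
        subst he'
        exact Sym2.out_fst_mem _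
      by_cases h2 : (C i).card = 2
      · have : g i = 1 := by simp [hg, h2, hns2]
        omega
      · have : g i = (C i).card := by simp [hg, hns3, hns2, hc1, h2]
        omega
  -- total size bound: |S| ≤ k + (d + q)
  have hsum : S.card ≤ k + (d + q) := by
    calc S.card ≤ ∑ i, (T i).card := Finset.card_biUnion_le
      _ ≤ ∑ i, (1 + g i) := Finset.sum_le_sum fun i _ => hTcard i
      _ = k + (d + q) := by
          rw [Finset.sum_add_distrib]
          congr 1
          · simp
          · rw [hg]
            rw [Finset.sum_add_distrib]
            congr 1
            · rw [hd, Finset.card_filter]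
            · rw [hq]
              exact (Finset.sum_filter _ _).symm
  have h1 := hVC S hcov
  have h2 : (S.card : ℝ) ≤ (k : ℝ) + ((d : ℝ) + (q : ℝ)) := by exact_mod_cast hsum
  have h3 : (k : ℝ) * (1 + ε) = (k : ℝ) + (k : ℝ) * ε := by ring
  have hc0 : (0 : ℝ) ≤ (c : ℝ) := Nat.cast_nonneg c
  have hd0 : (0 : ℝ) ≤ (d : ℝ) := Nat.cast_nonneg d
  have hq0 : (0 : ℝ) ≤ (q : ℝ) := Nat.cast_nonneg q
  linarith
end

section
/- Let p^(1), …, p^(n) be probability vectors in ℝ^d (nonnegative components summing to 1) with all components positive, and let V₁, …, V_k be a partition of {p^(1), …, p^(n)}. For each i, let c^(i) ∈ ℝ^d be the centroid of V_i, i.e., c^(i)_j = (Σ_{p∈V_i} p_j)/|V_i|. Then Σ_{i=1}^{k} Σ_{p∈V_i} KL(p, c^(i)) = Σ_{i=1}^{k} Ĩ(Σ_{p∈V_i} p) − Σ_{l=1}^{n} Ĩ(p^(l)), where KL(p,q) = Σ_{j=1}^{d} p_j·ln(p_j/q_j) and Ĩ(v) = Σ_{j=1}^{d} v_j·ln(‖v‖₁/v_j)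 with ‖v‖₁ = Σⱼ v_j. -/
/-- The entropy impurity (in nats) of a vector `v` with positive components:
`Ĩ(v) = Σⱼ vⱼ · ln(‖v‖₁ / vⱼ)`. -/
noncomputable def natImpurity {d : ℕ} (v : Fin d → ℝ) : ℝ :=
  ∑ j, v j * Real.log ((∑ j', v j') / v j)

/-- The Kullback–Leibler divergence (in nats): `KL(p, q) = Σⱼ pⱼ · ln(pⱼ / qⱼ)`. -/
noncomputable def klDiv {d : ℕ} (p q : Fin d → ℝ) : ℝ :=
  ∑ j, p j * Real.log (p j / q j)

lemma natImpurity_prob {d : ℕ} (v : Fin d → ℝ) (hv : ∀ j, 0 < v j)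
    (h1 : ∑ j, v j = 1) :
    natImpurity v = - ∑ j, v j * Real.log (v j) := by
  unfold natImpurity
  rw [h1, ← Finset.sum_neg_distrib]
  refine Finset.sum_congr rfl fun j _ => ?_
  rw [one_div, Real.log_inv]
  ring

/-- for probability vectors `p⁽¹⁾, …, p⁽ⁿ⁾` with positive components
partitioned into groups `V₁, …, V_k`, with `c⁽ⁱ⁾` the centroid of `Vᵢ`, one has
`Σᵢ Σ_{p ∈ Vᵢ} KL(p, c⁽ⁱ⁾) = Σᵢ Ĩ(Σ_{p ∈ Vᵢ} p) − Σₗ Ĩ(p⁽ˡ⁾)`. -/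
theorem kl_clustering_eq_impurity {n d k : ℕ}
    (p : Fin n → Fin d → ℝ)
    (hp : ∀ l j, 0 < p l j) (hp1 : ∀ l, ∑ j, p l j = 1)
    (Vp : Fin k → Finset (Fin n))
    (hdisj : ∀ i j, i ≠ j → Disjoint (Vp i) (Vp j))
    (hcover : Finset.univ.biUnion Vp = (Finset.univ : Finset (Fin n)))
    (hne : ∀ i, (Vp i).Nonempty) :
    (∑ i, ∑ l ∈ Vp i,
        klDiv (p l) (fun j => (∑ m ∈ Vp i, p m j) / (Vp i).card))
      = (∑ i, natImpurity (fun j => ∑ l ∈ Vp i, p l j)) -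
          ∑ l, natImpurity (p l) := by
  have key : ∀ i, ∑ l ∈ Vp i,
        klDiv (p l) (fun j => (∑ m ∈ Vp i, p m j) / (Vp i).card)
      = natImpurity (fun j => ∑ l ∈ Vp i, p l j) - ∑ l ∈ Vp i, natImpurity (p l) := by
    intro i
    have hcard : (0:ℝ) < (Vp i).card := by
      exact_mod_cast Finset.card_pos.mpr (hne i)
    have hs : ∀ j, 0 < ∑ l ∈ Vp i, p l j :=
      fun j => Finset.sum_pos (fun l _ => hp l j) (hne i)
    have hsum : ∑ j, ∑ l ∈ Vp i, p l j = ((Vp i).card : ℝ) := by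
      rw [Finset.sum_comm]; simp [hp1]
    have hImpS : natImpurity (fun j => ∑ l ∈ Vp i, p l j)
        = - ∑ j, (∑ l ∈ Vp i, p l j) *
            Real.log ((∑ l ∈ Vp i, p l j) / (Vp i).card) := by
      unfold natImpurity
      rw [← Finset.sum_neg_distrib]
      refine Finset.sum_congr rfl fun j _ => ?_
      simp only
      rw [hsum, Real.log_div (by exact_mod_cast hcard.ne') (hs j).ne',
        Real.log_div (hs j).ne' (by exact_mod_cast hcard.ne')]
      ring
    have hlhs : ∑ l ∈ Vp i,
          klDiv (p l) (fun j => (∑ m ∈ Vp i, p m j) / (Vp i).card)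
        = (∑ l ∈ Vp i, ∑ j, p l j * Real.log (p l j))
          - ∑ j, (∑ l ∈ Vp i, p l j) *
              Real.log ((∑ l ∈ Vp i, p l j) / (Vp i).card) := by
      have step1 : ∀ l ∈ Vp i,
          klDiv (p l) (fun j => (∑ m ∈ Vp i, p m j) / (Vp i).card)
          = (∑ j, p l j * Real.log (p l j))
            - ∑ j, p l j * Real.log ((∑ m ∈ Vp i, p m j) / (Vp i).card) := by
        intro l _
        unfold klDiv
        rw [← Finset.sum_sub_distrib]
        refine Finset.sum_congr rfl fun j _ => ?_
        simp only
        rw [Real.log_div (hp l j).ne' (div_pos (hs j) hcard).ne']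
        ring
      rw [Finset.sum_congr rfl step1, Finset.sum_sub_distrib]
      congr 1
      rw [Finset.sum_comm]
      exact Finset.sum_congr rfl fun j _ => (Finset.sum_mul _ _ _).symm
    rw [hlhs, hImpS]
    have : ∑ l ∈ Vp i, natImpurity (p l)
        = - ∑ l ∈ Vp i, ∑ j, p l j * Real.log (p l j) := by
      rw [← Finset.sum_neg_distrib]
      exact Finset.sum_congr rfl fun l _ => natImpurity_prob (p l) (hp l) (hp1 l)
    rw [this]
    ring
  rw [Finset.sum_congr rfl fun i _ => key i, Finset.sum_sub_distrib]
  congr 1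
  rw [← Finset.sum_biUnion, hcover]
  intro a _ b _ hab
  exact hdisj a b hab
end

section
/- Let x and y be real numbers with 3 ≤ x and y ≥ x + 2. Then (2x + x·log₂ x) + (2y + y·log₂ y) ≥ (2(x+1) + (x+1)·log₂(x+1)) + (2(y−1) + (y−1)·log₂(y−1)). -/
/-- smoothing/exchange step: for reals `x, y` with `3 ≤ x` and
`y ≥ x + 2`, replacing the pair `(x, y)` by `(x+1, y−1)` does not increase the total
value of `2t + t·log₂ t`:
`(2x + x·log₂ x) + (2y + y·log₂ y) ≥ (2(x+1) + (x+1)·log₂(x+1)) + (2(y−1) + (y−1)·log₂(y−1))`. -/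
theorem exchange_step (x y : ℝ) (hx : 3 ≤ x) (hy : x + 2 ≤ y) :
    (2 * (x + 1) + (x + 1) * Real.logb 2 (x + 1)) +
        (2 * (y - 1) + (y - 1) * Real.logb 2 (y - 1))
      ≤ (2 * x + x * Real.logb 2 x) + (2 * y + y * Real.logb 2 y) := by
  have hf := Real.convexOn_mul_log
  set f : ℝ → ℝ := fun t => t * Real.log t with hfdef
  have hxm : x ∈ Set.Ici (0:ℝ) := by simp; linarith
  have hx1 : x + 1 ∈ Set.Ici (0:ℝ) := by simp; linarith
  have hy1 : y - 1 ∈ Set.Ici (0:ℝ) := by simp; linarith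
  have hym : y ∈ Set.Ici (0:ℝ) := by simp; linarith
  -- slope f x (x+1) ≤ slope f x y
  have h1 : (f (x+1) - f x) / ((x+1) - x) ≤ (f y - f x) / (y - x) :=
    hf.secant_mono hxm hx1 hym (by intro h; linarith [congrArg id h])
      (by intro h; linarith [congrArg id h]) (by linarith)
  -- slope f y x ≤ slope f y (y-1)
  have h2 : (f x - f y) / (x - y) ≤ (f (y-1) - f y) / ((y-1) - y) :=
    hf.secant_mono hym hxm hy1 (by intro h; linarith [congrArg id h])
      (by intro h; linarith [congrArg id h]) (by linarith)
  have e1 : (f (x+1) - f x) / ((x+1) - x) = f (x+1) - f x := by ring_nf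
  have e2 : (f (y-1) - f y) / ((y-1) - y) = f y - f (y-1) := by
    rw [show (y-1) - y = -1 by ring]; field_simp; ring
  have e3 : (f x - f y) / (x - y) = (f y - f x) / (y - x) := by
    rw [← neg_div_neg_eq]; ring_nf
  have key : f (x+1) + f (y-1) ≤ f x + f y := by
    rw [e1] at h1; rw [e2, e3] at h2; linarith
  have hlog2 : (0:ℝ) < Real.log 2 := Real.log_pos (by norm_num)
  have : (x+1) * Real.logb 2 (x+1) + (y-1) * Real.logb 2 (y-1)
      ≤ x * Real.logb 2 x + y * Real.logb 2 y := by
    simp only [Real.logb, ← mul_div_assoc]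
    rw [← add_div, ← add_div, div_le_div_iff₀ hlog2 hlog2]
    have := mul_le_mul_of_nonneg_right key hlog2.le
    simpa [hfdef] using this
  linarith
end
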